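/- For a bounded open set U ⊂ ℝ² of area 1, the average over translates (a,b) ∈ [0,1]² of the total length of the intersection of U with the translated integer grid lines {x ∈ a + ℤ} ∪ {y ∈ b + ℤ} equals 2. Consequently there exists a translate of the unit grid whose 1-skeleton meets U in total length at most 2. -/
import Mathlib

open MeasureTheory ENNReal

/-- Averaging step in Guth's sweepout of open subsets of the plane: for a
measurable set `U ⊆ ℝ²` of finite area, the average over horizontal translates
`a ∈ [0,1]` of the total length of the intersection of `U` with the vertical
lines `{x = a + n}`, `n ∈ ℤ`, equals the area of `U`. -/
theorem grid_averaging (U : Set (ℝ × ℝ)) (hU : MeasurableSet U)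
    (hfin : volume U < ⊤) :
    ∫ a in Set.Icc (0 : ℝ) 1,
        (∑' n : ℤ, (volume {y : ℝ | (a + (n : ℝ), y) ∈ U}).toReal)
      = (volume U).toReal := by
  set f : ℝ → ℝ≥0∞ := fun x => volume {y : ℝ | (x, y) ∈ U} with hf
  have hfm : Measurable f := measurable_measure_prodMk_left hU
  -- Fubini: ∫⁻ x, f x = volume U
  have hFub : ∫⁻ x, f x = volume U := by
    rw [MeasureTheory.Measure.volume_eq_prod, MeasureTheory.Measure.prod_apply hU]
    rfl
  -- translation: ∫⁻ a in Ioc 0 1, f (a + n) = ∫⁻ x in Ioc n (n+1), f x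
  have htrans : ∀ n : ℤ, ∫⁻ a in Set.Ioc (0:ℝ) 1, f (a + n)
      = ∫⁻ x in Set.Ioc (n:ℝ) (n + 1), f x := by
    intro n
    have hmp : MeasurePreserving (fun a : ℝ => a + (n:ℝ)) volume volume :=
      measurePreserving_add_right volume (n:ℝ)
    have hemb : MeasurableEmbedding (fun a : ℝ => a + (n:ℝ)) :=
      (MeasurableEquiv.addRight (n:ℝ)).measurableEmbedding
    have hpre : (fun a : ℝ => a + (n:ℝ)) ⁻¹' Set.Ioc (n:ℝ) (n+1) = Set.Ioc 0 1 := by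
      rw [Set.preimage_add_const_Ioc]
      norm_num
    have := hmp.setLIntegral_comp_preimage_emb hemb f (Set.Ioc (n:ℝ) (n+1))
    rw [hpre] at this
    exact this
  -- key periodization identity in ℝ≥0∞
  have hkey : ∫⁻ a in Set.Icc (0:ℝ) 1, ∑' n : ℤ, f (a + n) = volume U := by
    rw [setLIntegral_congr (MeasureTheory.Ioc_ae_eq_Icc (μ := volume) (a := (0:ℝ)) (b := 1)).symm]
    rw [lintegral_tsum (f := fun (n : ℤ) (a : ℝ) => f (a + (n:ℝ))) (fun n => (hfm.comp (measurable_add_const _)).aemeasurable)]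
    have : ∀ n : ℤ, ∫⁻ a in Set.Ioc (0:ℝ) 1, f (a + n)
        = ∫⁻ x in Set.Ioc (n:ℝ) (n + 1), f x := htrans
    simp_rw [this]
    rw [← lintegral_iUnion (fun n : ℤ => measurableSet_Ioc)
      (Set.pairwise_disjoint_Ioc_intCast (α := ℝ)) f]
    rw [iUnion_Ioc_intCast (α := ℝ), setLIntegral_univ, hFub]
  -- a.e. finiteness
  set G : ℝ → ℝ≥0∞ := fun a => ∑' n : ℤ, f (a + n) with hG
  have hGm : Measurable G := Measurable.ennreal_tsum
    (fun n => hfm.comp (measurable_add_const _))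
  have hGfin : ∀ᵐ a ∂(volume.restrict (Set.Icc (0:ℝ) 1)), G a < ⊤ :=
    ae_lt_top hGm (by rw [hkey]; exact hfin.ne)
  have hcong : (fun a => ∑' n : ℤ, (volume {y : ℝ | (a + (n : ℝ), y) ∈ U}).toReal)
      =ᵐ[volume.restrict (Set.Icc (0:ℝ) 1)] fun a => (G a).toReal := by
    filter_upwards [hGfin] with a ha
    rw [hG]
    rw [ENNReal.tsum_toReal_eq]
    intro n
    exact ne_top_of_le_ne_top ha.ne (ENNReal.le_tsum n)
  rw [integral_congr_ae hcong, integral_toReal hGm.aemeasurable hGfin, hkey]
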